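/- arXiv:1807.03183 — 6 statements merged into one kernel-verified Lean document; each statement's English description precedes it below -/
import Mathlib

section
/- Let α > 0, let U be an open subset of the upper half-plane Π⁺ = {z ∈ ℂ : Im z > 0}, and let f : ℂ → ℂ be complex differentiable (analytic) on U. If z₀ ∈ U is a local minimum (relative to U) of the function z ↦ (Im z)^{α/2}·|f(z)|, then f(z₀) = 0. -/
open Complex

/-- Every local minimum (relative to an open subset `U` of the upper half-plane) of
`z ↦ (Im z)^(α/2) * |f z|`, with `f` analytic on `U`, is a zero of `f`. -/
theorem local_min_of_weighted_modulus_is_zero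
    (α : ℝ) (hα : 0 < α)
    (U : Set ℂ) (hU : IsOpen U) (hUsub : U ⊆ {z : ℂ | 0 < z.im})
    (f : ℂ → ℂ) (hf : DifferentiableOn ℂ f U)
    (z₀ : ℂ) (hz₀ : z₀ ∈ U)
    (hmin : IsLocalMinOn (fun z : ℂ => z.im ^ (α / 2) * ‖f z‖) U z₀) :
    f z₀ = 0 := by
  by_contra hf0
  set y₀ : ℝ := z₀.im with hy₀def
  have hy₀ : 0 < y₀ := hUsub hz₀
  set F : ℂ → ℝ := fun z => z.im ^ (α / 2) * ‖f z‖ with hF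
  set h : ℂ → ℂ := fun z => (z - (starRingEnd ℂ) z₀) ^ (α : ℂ) * f z with hh
  set C : ℝ := (4 * y₀) ^ (α / 2) with hC
  have hCpos : 0 < C := Real.rpow_pos_of_pos (by linarith) _
  -- key identity: |w - conj z₀|² = 4 y₀ Im w + |w - z₀|²
  have key : ∀ w : ℂ, (‖w - (starRingEnd ℂ) z₀‖) ^ (2:ℕ)
      = 4 * y₀ * w.im + (‖w - z₀‖) ^ (2:ℕ) := by
    intro w
    rw [Complex.sq_norm, Complex.sq_norm, Complex.normSq_apply, Complex.normSq_apply]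
    simp [hy₀def]
    ring
  have hsub_ne : ∀ w : ℂ, 0 < w.im → w - (starRingEnd ℂ) z₀ ≠ 0 := by
    intro w hw hw0
    have : (w - (starRingEnd ℂ) z₀).im = w.im + y₀ := by simp [hy₀def]
    rw [hw0] at this
    simp at this
    linarith
  -- |h w| formula
  have habs : ∀ w : ℂ, 0 < w.im →
      ‖h w‖ = (‖w - (starRingEnd ℂ) z₀‖) ^ α * ‖f w‖ := by
    intro w hw
    simp only [hh, norm_mul]
    rw [Complex.norm_cpow_of_ne_zero (hsub_ne w hw)]
    simp
  -- rpow square trick: for 0 ≤ x, x ^ α = (x^2) ^ (α/2)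
  have sqpow : ∀ x : ℝ, 0 ≤ x → (x ^ (2:ℕ)) ^ (α / 2) = x ^ α := by
    intro x hx
    rw [← Real.rpow_natCast x 2, ← Real.rpow_mul hx]
    congr 1
    ring
  -- lower bound : C * F w ≤ |h w| for w with 0 < im
  have hlow : ∀ w : ℂ, 0 < w.im → C * F w ≤ ‖h w‖ := by
    intro w hw
    rw [habs w hw]
    have h1 : (4 * y₀ * w.im) ^ (α / 2) ≤ (‖w - (starRingEnd ℂ) z₀‖) ^ α := by
      rw [← sqpow _ (norm_nonneg _)]
      apply Real.rpow_le_rpow (mul_nonneg (by linarith) hw.le)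
      · rw [key w]; exact le_add_of_nonneg_right (by positivity)
      · positivity
    have h2 : (4 * y₀ * w.im) ^ (α / 2) = C * w.im ^ (α / 2) := by
      rw [hC, ← Real.mul_rpow (by linarith) hw.le]
    calc C * F w = (4 * y₀ * w.im) ^ (α/2) * ‖f w‖ := by
          rw [h2, hF]; ring
      _ ≤ _ := by
          apply mul_le_mul_of_nonneg_right h1 (norm_nonneg _)
  -- value at z₀
  have habs0 : ‖h z₀‖ = C * F z₀ := by
    rw [habs z₀ hy₀, hF, hC]
    have : (‖z₀ - (starRingEnd ℂ) z₀‖) ^ α = (4 * y₀) ^ (α/2) * y₀ ^ (α/2) := by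
      rw [← Real.mul_rpow (by linarith) hy₀.le, ← sqpow (‖z₀ - (starRingEnd ℂ) z₀‖) (norm_nonneg _)]
      congr 1
      rw [key z₀]
      simp [hy₀def]
    rw [this]; ring
  have hF0pos : 0 < F z₀ := by
    rw [hF]
    have := norm_pos_iff.mpr hf0
    positivity
  have hh0 : h z₀ ≠ 0 := by
    have hpos : 0 < ‖h z₀‖ := by
      rw [habs0]; exact mul_pos hCpos hF0pos
    exact norm_ne_zero_iff.mp hpos.ne'
  -- local min of F at z₀ in 𝓝 z₀
  have hminN : ∀ᶠ w in nhds z₀, F z₀ ≤ F w := by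
    have := hmin
    rw [IsLocalMinOn, nhdsWithin_eq_nhds.mpr (hU.mem_nhds hz₀)] at this
    exact this
  have hmem : ∀ᶠ w in nhds z₀, w ∈ U := hU.eventually_mem hz₀
  -- |h| local min at z₀
  have hlocmin : IsLocalMin (norm ∘ h) z₀ := by
    filter_upwards [hminN, hmem] with w hFw hwU
    have hwim : 0 < w.im := hUsub hwU
    have : ‖h z₀‖ ≤ ‖h w‖ :=
      habs0 ▸ le_trans (by nlinarith [hlow w hwim]) (hlow w hwim)
    simpa using this
  -- h differentiable near z₀
  have hdiff : ∀ᶠ w in nhds z₀, DifferentiableAt ℂ h w := by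
    filter_upwards [hmem] with w hwU
    have hwim : 0 < w.im := hUsub hwU
    have hslit : w - (starRingEnd ℂ) z₀ ∈ Complex.slitPlane := by
      apply Complex.mem_slitPlane_iff.mpr
      right
      have : (w - (starRingEnd ℂ) z₀).im = w.im + y₀ := by simp [hy₀def]
      rw [this]; positivity
    have d1 : DifferentiableAt ℂ (fun z : ℂ => (z - (starRingEnd ℂ) z₀) ^ (α : ℂ)) w :=
      (((hasDerivAt_id w).sub_const ((starRingEnd ℂ) z₀)).cpow_const hslit).differentiableAt
    exact d1.mul ((hf w hwU).differentiableAt (hU.mem_nhds hwU))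
  -- minimum modulus principle
  have := Complex.eventually_eq_or_eq_zero_of_isLocalMin_norm hdiff hlocmin
  rcases this with hconst | h0
  · -- pick z = z₀ + r/2 and derive a contradiction
    rcases Metric.eventually_nhds_iff.mp (hconst.and (hminN.and hmem)) with ⟨r, hrpos, hball⟩
    set z : ℂ := z₀ + ((r / 2 : ℝ) : ℂ) with hzdef
    have hzsub : z - z₀ = ((r / 2 : ℝ) : ℂ) := by rw [hzdef]; ring
    have habsz : ‖z - z₀‖ = r / 2 := by
      rw [hzsub, Complex.norm_real, Real.norm_eq_abs, abs_of_pos (by linarith)]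
    have hdist : dist z z₀ < r := by
      rw [Complex.dist_eq, habsz]; linarith
    obtain ⟨hzconst, hFz, hzU⟩ := hball hdist
    have hzim : z.im = y₀ := by simp [hzdef, hy₀def]
    have hzim' : 0 < z.im := by rw [hzim]; exact hy₀
    have hfz : f z ≠ 0 := by
      intro h0
      apply hh0
      rw [← hzconst]
      simp [hh, h0]
    have hfzpos : 0 < ‖f z‖ := norm_pos_iff.mpr hfz
    have h2 : (‖z - (starRingEnd ℂ) z₀‖) ^ (2:ℕ) = 4 * y₀ * y₀ + (r/2)^(2:ℕ) := by
      rw [key z, hzim, habsz]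
    have hstrict : C * y₀ ^ (α / 2) < (‖z - (starRingEnd ℂ) z₀‖) ^ α := by
      rw [hC, ← Real.mul_rpow (by linarith) hy₀.le,
        ← sqpow (‖z - (starRingEnd ℂ) z₀‖) (norm_nonneg _)]
      apply Real.rpow_lt_rpow (by positivity)
      · rw [h2]; nlinarith
      · linarith
    have hgt : C * F z < ‖h z‖ := by
      rw [habs z hzim', hF]
      simp only [hzim]
      nlinarith
    have hle : C * F z₀ ≤ C * F z := mul_le_mul_of_nonneg_left hFz hCpos.le
    have heq : ‖h z‖ = ‖h z₀‖ := by rw [hzconst]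
    rw [heq, habs0] at hgt
    linarith
  · exact hh0 h0
end

section
/- Let Ψ(x) = (1/√(2π))·∫_x^∞ e^{−t²/2} dt. For any a > 0, m > 0, and k > 0, the function h(x) = x^k·Ψ(a·x^m) is monotonically decreasing on the set of x > 0 with x^m ≥ k√(2π)/(2am); that is, if 0 < x₁ ≤ x₂ and x₁^m ≥ k√(2π)/(2am), then h(x₂) ≤ h(x₁). -/
open Real MeasureTheory Set

noncomputable def gtF (u : ℝ) : ℝ := ∫ t in Set.Ioi u, Real.exp (-t ^ 2 / 2)

lemma gt_cont : Continuous (fun t : ℝ => Real.exp (-t ^ 2 / 2)) := by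
  continuity

lemma gt_integrable : Integrable (fun t : ℝ => Real.exp (-t ^ 2 / 2)) := by
  have h := integrable_exp_neg_mul_sq (by norm_num : (0:ℝ) < 1/2)
  have he : (fun t : ℝ => Real.exp (-t ^ 2 / 2)) = fun x : ℝ => Real.exp (-(1/2) * x ^ 2) := by
    funext x; ring_nf
  rw [he]; exact h

lemma gt_F_eq (u : ℝ) : gtF u = gtF 0 - ∫ t in (0:ℝ)..u, Real.exp (-t ^ 2 / 2) := by
  have h1 := intervalIntegral.integral_Iic_add_Ioi (b := u)
    gt_integrable.integrableOn gt_integrable.integrableOn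
  have h2 := intervalIntegral.integral_Iic_add_Ioi (b := (0:ℝ))
    gt_integrable.integrableOn gt_integrable.integrableOn
  have h3 := intervalIntegral.integral_Iic_sub_Iic (a := (0:ℝ)) (b := u)
    gt_integrable.integrableOn gt_integrable.integrableOn
  simp only [gtF]
  linarith

lemma gt_F_hasDeriv (u : ℝ) : HasDerivAt gtF (-(Real.exp (-u ^ 2 / 2))) u := by
  have hder : HasDerivAt (fun v => ∫ t in (0:ℝ)..v, Real.exp (-t ^ 2 / 2))
      (Real.exp (-u ^ 2 / 2)) u :=
    intervalIntegral.integral_hasDerivAt_right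
      (gt_integrable.intervalIntegrable)
      (gt_cont.stronglyMeasurable.stronglyMeasurableAtFilter)
      (gt_cont.continuousAt)
  have h := (hasDerivAt_const u (gtF 0)).sub hder
  have : HasDerivAt gtF (gtF 0 - gtF 0 - Real.exp (-u ^ 2 / 2) + gtF 0 - gtF 0) u := by
    refine HasDerivAt.congr_of_eventuallyEq ?_ (Filter.Eventually.of_forall fun x => gt_F_eq x)
    convert h using 1; rfl; ring
  convert this using 1; ring

lemma gt_F_zero : gtF 0 = Real.sqrt (2 * Real.pi) / 2 := by
  have h := integral_gaussian_Ioi (1/2)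
  have he : (fun x : ℝ => Real.exp (-(1/2) * x ^ 2)) = fun t : ℝ => Real.exp (-t ^ 2 / 2) := by
    funext x; ring_nf
  rw [he] at h
  have : Real.pi / (1/2) = 2 * Real.pi := by ring
  rw [gtF, h, this]

lemma gt_chernoff {u : ℝ} (hu : 0 ≤ u) :
    gtF u ≤ Real.sqrt (2 * Real.pi) / 2 * Real.exp (-u ^ 2 / 2) := by
  have hshift : Integrable (fun t : ℝ => Real.exp (-(t - u) ^ 2 / 2)) := by
    have := gt_integrable.comp_sub_right u
    simpa using this
  have step1 : gtF u ≤ ∫ t in Set.Ioi u, Real.exp (-u ^ 2 / 2) * Real.exp (-(t - u) ^ 2 / 2) := by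
    refine setIntegral_mono_on gt_integrable.integrableOn
      ((hshift.const_mul _).integrableOn) measurableSet_Ioi ?_
    intro t ht
    rw [← Real.exp_add]
    apply Real.exp_le_exp.2
    have htu : u ≤ t := le_of_lt ht
    nlinarith [sq_nonneg (t - u), mul_nonneg hu (sub_nonneg.2 htu)]
  have step2 : (∫ t in Set.Ioi u, Real.exp (-u ^ 2 / 2) * Real.exp (-(t - u) ^ 2 / 2))
      = Real.exp (-u ^ 2 / 2) * gtF 0 := by
    rw [MeasureTheory.integral_const_mul]
    congr 1
    rw [← MeasureTheory.integral_indicator measurableSet_Ioi]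
    have hind : (Set.Ioi u).indicator (fun t : ℝ => Real.exp (-(t - u) ^ 2 / 2))
        = fun t : ℝ => (Set.Ioi (0:ℝ)).indicator (fun s : ℝ => Real.exp (-s ^ 2 / 2)) (t - u) := by
      funext t
      simp only [Set.indicator_apply, Set.mem_Ioi, sub_pos]
    rw [hind, MeasureTheory.integral_sub_right_eq_self
      ((Set.Ioi (0:ℝ)).indicator (fun s : ℝ => Real.exp (-s ^ 2 / 2))) u,
      MeasureTheory.integral_indicator measurableSet_Ioi]
    rfl
  rw [step2, gt_F_zero] at step1
  linarith [step1]

/-- For `Ψ(x) = (1/√(2π)) ∫_x^∞ e^{-t²/2} dt` and `a, m, k > 0`, the function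
`h(x) = x^k · Ψ(a·x^m)` is monotonically decreasing for `x > 0` with
`x^m ≥ k√(2π)/(2am)`. -/
theorem gaussian_tail_monotone
    (a m k : ℝ) (ha : 0 < a) (hm : 0 < m) (hk : 0 < k)
    (x₁ x₂ : ℝ) (hx₁ : 0 < x₁) (h12 : x₁ ≤ x₂)
    (hthr : k * Real.sqrt (2 * Real.pi) / (2 * a * m) ≤ x₁ ^ m) :
    x₂ ^ k * ((1 / Real.sqrt (2 * Real.pi)) * ∫ t in Set.Ioi (a * x₂ ^ m), Real.exp (-t ^ 2 / 2))
      ≤ x₁ ^ k * ((1 / Real.sqrt (2 * Real.pi)) * ∫ t in Set.Ioi (a * x₁ ^ m), Real.exp (-t ^ 2 / 2)) := by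
  have hπ : 0 < Real.sqrt (2 * Real.pi) := Real.sqrt_pos.2 (by positivity)
  set c : ℝ := 1 / Real.sqrt (2 * Real.pi) with hc
  have hcpos : 0 < c := by positivity
  set h : ℝ → ℝ := fun x => x ^ k * (c * gtF (a * x ^ m)) with hh
  -- derivative of h at any x > 0
  have hD : ∀ x : ℝ, 0 < x → HasDerivAt h
      (k * x ^ (k - 1) * (c * gtF (a * x ^ m))
        + x ^ k * (c * (-(Real.exp (-(a * x ^ m) ^ 2 / 2)) * (a * (m * x ^ (m - 1)))))) x := by
    intro x hx
    have h1 : HasDerivAt (fun x : ℝ => x ^ k) (k * x ^ (k - 1)) x :=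
      Real.hasDerivAt_rpow_const (Or.inl hx.ne')
    have h2 : HasDerivAt (fun x : ℝ => a * x ^ m) (a * (m * x ^ (m - 1))) x :=
      (Real.hasDerivAt_rpow_const (Or.inl hx.ne')).const_mul a
    have h3 := (gt_F_hasDeriv (a * x ^ m)).comp x h2
    have h4 := h3.const_mul c
    exact h1.mul h4
  -- the derivative is nonpositive for x ≥ x₁
  have hDnonpos : ∀ x : ℝ, x₁ ≤ x →
      k * x ^ (k - 1) * (c * gtF (a * x ^ m))
        + x ^ k * (c * (-(Real.exp (-(a * x ^ m) ^ 2 / 2)) * (a * (m * x ^ (m - 1))))) ≤ 0 := by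
    intro x hx1x
    have hx : 0 < x := lt_of_lt_of_le hx₁ hx1x
    have hxm : 0 < x ^ m := Real.rpow_pos_of_pos hx m
    have hxk1 : 0 < x ^ (k - 1) := Real.rpow_pos_of_pos hx (k - 1)
    have hu : 0 < a * x ^ m := by positivity
    have hfu : 0 < Real.exp (-(a * x ^ m) ^ 2 / 2) := Real.exp_pos _
    have hxm1 : x₁ ^ m ≤ x ^ m := Real.rpow_le_rpow hx₁.le hx1x hm.le
    have hthr' : k * Real.sqrt (2 * Real.pi) / 2 ≤ a * m * x ^ m := by
      have h2am : 0 < 2 * a * m := by positivity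
      rw [div_le_iff₀ h2am] at hthr
      nlinarith
    have hch := gt_chernoff hu.le
    have key : k * gtF (a * x ^ m) ≤ a * m * x ^ m * Real.exp (-(a * x ^ m) ^ 2 / 2) := by
      calc k * gtF (a * x ^ m)
          ≤ k * (Real.sqrt (2 * Real.pi) / 2 * Real.exp (-(a * x ^ m) ^ 2 / 2)) :=
            mul_le_mul_of_nonneg_left hch hk.le
        _ = (k * Real.sqrt (2 * Real.pi) / 2) * Real.exp (-(a * x ^ m) ^ 2 / 2) := by ring
        _ ≤ (a * m * x ^ m) * Real.exp (-(a * x ^ m) ^ 2 / 2) :=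
            mul_le_mul_of_nonneg_right hthr' hfu.le
    have hxk : x ^ k = x ^ (k - 1) * x := by
      rw [← Real.rpow_add_one hx.ne' (k - 1), sub_add_cancel]
    have hxm' : x ^ m = x ^ (m - 1) * x := by
      rw [← Real.rpow_add_one hx.ne' (m - 1), sub_add_cancel]
    have heq : k * x ^ (k - 1) * (c * gtF (a * x ^ m))
        + x ^ k * (c * (-(Real.exp (-(a * x ^ m) ^ 2 / 2)) * (a * (m * x ^ (m - 1)))))
        = x ^ (k - 1) * c * (k * gtF (a * x ^ m)
            - a * m * x ^ m * Real.exp (-(a * x ^ m) ^ 2 / 2)) := by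
      rw [hxk, hxm']; ring
    rw [heq]
    exact mul_nonpos_of_nonneg_of_nonpos (by positivity) (by linarith)
  -- apply the mean value theorem machinery
  have hanti : AntitoneOn h (Set.Icc x₁ x₂) := by
    apply antitoneOn_of_deriv_nonpos (convex_Icc x₁ x₂)
    · intro x hx
      exact (hD x (lt_of_lt_of_le hx₁ hx.1)).continuousAt.continuousWithinAt
    · intro x hx
      rw [interior_Icc] at hx
      exact (hD x (lt_of_lt_of_le hx₁ hx.1.le)).differentiableAt.differentiableWithinAt
    · intro x hx
      rw [interior_Icc] at hx
      rw [(hD x (lt_of_lt_of_le hx₁ hx.1.le)).deriv]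
      exact hDnonpos x hx.1.le
  have := hanti (Set.left_mem_Icc.2 h12) (Set.right_mem_Icc.2 h12) h12
  simpa [hh, hc, gtF] using this
end

section
/- Let α > 1 and let s ∈ L²(ℝ, ℂ). Then the function F(z) = ∫_ℝ s(t)·(i(t−z))^{−(α+1)/2} dt, where the complex power is the principal branch, is well defined and complex differentiable at every point z of the upper half-plane Π⁺ = {z ∈ ℂ : Im z > 0}; in particular F is analytic on Π⁺. -/
open Complex MeasureTheory

namespace CauchyWTAux

lemma base_re (t : ℝ) (w : ℂ) : (Complex.I * ((t : ℂ) - w)).re = w.im := by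
  simp [Complex.mul_re]

lemma base_ne_zero {w : ℂ} (hw : 0 < w.im) (t : ℝ) : Complex.I * ((t : ℂ) - w) ≠ 0 := by
  intro h
  have h2 := base_re t w
  rw [h] at h2
  simp at h2
  linarith

lemma base_mem_slitPlane {w : ℂ} (hw : 0 < w.im) (t : ℝ) :
    Complex.I * ((t : ℂ) - w) ∈ Complex.slitPlane := by
  rw [Complex.mem_slitPlane_iff, base_re]
  exact Or.inl hw

lemma abs_lower {w : ℂ} (hw : 0 < w.im) (t : ℝ) : w.im ≤ ‖(t : ℂ) - w‖ := by
  have h1 : |((t : ℂ) - w).im| ≤ ‖(t : ℂ) - w‖ := Complex.abs_im_le_norm _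
  have h2 : ((t : ℂ) - w).im = -w.im := by simp
  rw [h2, abs_neg, abs_of_pos hw] at h1
  exact h1

lemma abs_re_lower (t : ℝ) (w : ℂ) : |t - w.re| ≤ ‖(t : ℂ) - w‖ := by
  have h1 : |((t : ℂ) - w).re| ≤ ‖(t : ℂ) - w‖ := Complex.abs_re_le_norm _
  simpa using h1

lemma norm_cpow_real {w : ℂ} (hw : 0 < w.im) (t : ℝ) (c : ℝ) :
    ‖(Complex.I * ((t : ℂ) - w)) ^ ((c : ℝ) : ℂ)‖ = ‖(t : ℂ) - w‖ ^ c := by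
  rw [Complex.norm_cpow_of_ne_zero (base_ne_zero hw t)]
  simp

lemma cont_ker {w : ℂ} (hw : 0 < w.im) (e : ℂ) :
    Continuous (fun t : ℝ => (Complex.I * ((t : ℂ) - w)) ^ e) := by
  rw [continuous_iff_continuousAt]
  intro t
  have hbase : Continuous (fun t : ℝ => Complex.I * ((t : ℂ) - w)) := by continuity
  exact hbase.continuousAt.cpow continuousAt_const (base_mem_slitPlane hw t)

lemma kernel_memL2 {w : ℂ} (hw : 0 < w.im) {γ : ℝ} (hγ : 1 < γ) :
    MemLp (fun t : ℝ => ‖(t : ℂ) - w‖ ^ (-γ)) 2 volume := by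
  have hpos : ∀ t : ℝ, 0 < ‖(t : ℂ) - w‖ :=
    fun t => lt_of_lt_of_le hw (abs_lower hw t)
  have hcont : Continuous (fun t : ℝ => ‖(t : ℂ) - w‖ ^ (-γ)) := by
    apply Continuous.rpow_const
    · exact continuous_norm.comp (by continuity)
    · intro t; exact Or.inl (ne_of_gt (hpos t))
  rw [memLp_two_iff_integrable_sq hcont.aestronglyMeasurable]
  set m : ℝ := min 1 w.im with hm_def
  have hm : 0 < m := lt_min one_pos hw
  have key : ∀ t : ℝ, m / 2 * (1 + |t - w.re|) ≤ ‖(t : ℂ) - w‖ := by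
    intro t
    have h1 := abs_lower hw t
    have h2 := abs_re_lower t w
    have hm1 : m ≤ 1 := min_le_left _ _
    have hm2 : m ≤ w.im := min_le_right _ _
    nlinarith [abs_nonneg (t - w.re)]
  have hInt : Integrable (fun t : ℝ =>
      (m / 2) ^ (-(2 * γ)) * (1 + ‖t - w.re‖) ^ (-(2 * γ))) volume := by
    have h0 : Integrable (fun t : ℝ => (1 + ‖t‖) ^ (-(2 * γ))) volume := by
      apply integrable_one_add_norm (E := ℝ)
      simp only [Module.finrank_self, Nat.cast_one]
      linarith
    exact (h0.comp_sub_right w.re).const_mul _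
  refine hInt.mono' ((hcont.pow 2).aestronglyMeasurable) (Filter.Eventually.of_forall fun t => ?_)
  have hxpos := hpos t
  have hypos : 0 < m / 2 * (1 + |t - w.re|) := by positivity
  have e1 : ‖(‖(t : ℂ) - w‖ ^ (-γ)) ^ 2‖
      = ‖(t : ℂ) - w‖ ^ (-(2 * γ)) := by
    have habs : |(‖(t : ℂ) - w‖ ^ (-γ)) ^ 2| = (‖(t : ℂ) - w‖ ^ (-γ)) ^ 2 :=
      abs_of_nonneg (by positivity)
    rw [Real.norm_eq_abs, habs, sq, ← Real.rpow_add hxpos]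
    ring_nf
  rw [e1]
  calc ‖(t : ℂ) - w‖ ^ (-(2 * γ))
      ≤ (m / 2 * (1 + |t - w.re|)) ^ (-(2 * γ)) :=
        Real.rpow_le_rpow_of_nonpos hypos (key t) (by linarith)
    _ = (m / 2) ^ (-(2 * γ)) * (1 + ‖t - w.re‖) ^ (-(2 * γ)) := by
        rw [Real.mul_rpow (by positivity) (by positivity), Real.norm_eq_abs]

lemma integrable_mul_kernel {s : ℝ → ℂ} (hs : MemLp s 2 volume) {w : ℂ} (hw : 0 < w.im)
    {γ : ℝ} (hγ : 1 < γ) :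
    Integrable (fun t : ℝ => ‖s t‖ * ‖(t : ℂ) - w‖ ^ (-γ)) volume := by
  have h1 : MemLp (fun t : ℝ => ‖s t‖) 2 volume := hs.norm
  have h2 := kernel_memL2 hw hγ
  have h3 : MemLp ((fun t : ℝ => ‖s t‖) • (fun t : ℝ => ‖(t : ℂ) - w‖ ^ (-γ)))
      1 volume := by
    refine h2.smul h1 (hpqr := ⟨?_⟩)
    rw [inv_one, ← one_div, ENNReal.add_halves]
  rw [← memLp_one_iff_integrable]
  exact h3

lemma integrable_main {s : ℝ → ℂ} (hs : MemLp s 2 volume) {w : ℂ} (hw : 0 < w.im)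
    {γ : ℝ} (hγ : 1 < γ) :
    Integrable (fun t : ℝ => s t * (Complex.I * ((t : ℂ) - w)) ^ (((-γ : ℝ)) : ℂ)) volume := by
  have hmeas : AEStronglyMeasurable
      (fun t : ℝ => s t * (Complex.I * ((t : ℂ) - w)) ^ (((-γ : ℝ)) : ℂ)) volume :=
    hs.aestronglyMeasurable.mul (cont_ker hw _).aestronglyMeasurable
  refine (integrable_mul_kernel hs hw hγ).mono' hmeas (Filter.Eventually.of_forall fun t => ?_)
  rw [norm_mul, norm_cpow_real hw t (-γ)]

end CauchyWTAux

open CauchyWTAux in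
/-- Analyticity-inducing property of the Cauchy wavelet transform: for `α > 1` and
`s ∈ L²(ℝ)`, the function `F(z) = ∫_ℝ s(t)·(i(t-z))^{-(α+1)/2} dt` is well defined
(the integrand is integrable) and complex differentiable at every point of the
upper half-plane. -/
theorem cauchy_wavelet_transform_analytic
    (α : ℝ) (hα : 1 < α) (s : ℝ → ℂ) (hs : MeasureTheory.MemLp s 2 MeasureTheory.volume) :
    ∀ z : ℂ, 0 < z.im →
      (MeasureTheory.Integrable
          (fun t : ℝ => s t * (Complex.I * ((t : ℂ) - z)) ^ (-(((α : ℂ) + 1) / 2)))) ∧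
      DifferentiableAt ℂ
        (fun w : ℂ => ∫ t : ℝ, s t * (Complex.I * ((t : ℂ) - w)) ^ (-(((α : ℂ) + 1) / 2))) z := by
  intro z hz
  set c : ℝ := (α + 1) / 2 with hc
  have hc1 : 1 < c := by rw [hc]; linarith
  have ha : (-(((α : ℂ) + 1) / 2)) = (((-c : ℝ)) : ℂ) := by
    push_cast [hc]; ring
  have hε : 0 < z.im / 2 := by linarith
  have hball : ∀ w ∈ Metric.ball z (z.im / 2), z.im / 2 < w.im := by
    intro w hw
    have h1 : |(w - z).im| ≤ ‖w - z‖ := Complex.abs_im_le_norm _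
    rw [Metric.mem_ball, dist_eq_norm] at hw
    have h2 : |w.im - z.im| < z.im / 2 := lt_of_le_of_lt (by simpa using h1) hw
    have h3 := abs_lt.mp h2
    linarith [h3.1]
  simp only [ha]
  have hint : ∀ w : ℂ, 0 < w.im → Integrable
      (fun t : ℝ => s t * (Complex.I * ((t : ℂ) - w)) ^ (((-c : ℝ)) : ℂ)) volume :=
    fun w hw => integrable_main hs hw hc1
  refine ⟨hint z hz, ?_⟩
  have key := hasDerivAt_integral_of_dominated_loc_of_deriv_le (μ := volume)
    (F := fun w t => s t * (Complex.I * ((t : ℂ) - w)) ^ (((-c : ℝ)) : ℂ))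
    (F' := fun w t => s t * ((((-c : ℝ)) : ℂ) *
      (Complex.I * ((t : ℂ) - w)) ^ ((((-c : ℝ)) : ℂ) - 1) * (-Complex.I)))
    (x₀ := z)
    (bound := fun t => (c * 2 ^ (c + 1)) * (‖s t‖ * ‖(t : ℂ) - z‖ ^ (-(c + 1))))
    (Metric.ball_mem_nhds z hε) ?_ (hint z hz) ?_ ?_ ?_ ?_
  · exact key.2.differentiableAt
  · refine Filter.eventually_of_mem (Metric.ball_mem_nhds z hε) (fun w hw => ?_)
    have hw' : 0 < w.im := lt_trans hε (hball w hw)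
    exact hs.aestronglyMeasurable.mul (cont_ker hw' _).aestronglyMeasurable
  · exact hs.aestronglyMeasurable.mul
      (((continuous_const.mul (cont_ker hz _)).mul continuous_const).aestronglyMeasurable)
  · refine Filter.Eventually.of_forall (fun t => fun w hw => ?_)
    have hw' : 0 < w.im := lt_trans hε (hball w hw)
    have he : ((((-c : ℝ)) : ℂ) - 1) = (((-(c + 1) : ℝ)) : ℂ) := by push_cast; ring
    rw [norm_mul, norm_mul, norm_mul, he, norm_cpow_real hw' t (-(c + 1))]
    have h1 : ‖((((-c : ℝ)) : ℂ))‖ = c := by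
      rw [Complex.norm_real, Real.norm_eq_abs, abs_neg, abs_of_pos (by linarith)]
    have h2 : ‖-Complex.I‖ = 1 := by simp
    rw [h1, h2, mul_one]
    have hz_le : z.im ≤ ‖(t : ℂ) - z‖ := abs_lower hz t
    have hdist : ‖w - z‖ < z.im / 2 := by
      rwa [Metric.mem_ball, dist_eq_norm] at hw
    have htri : ‖(t : ℂ) - z‖ ≤ ‖(t : ℂ) - w‖ + ‖w - z‖ := by
      have := norm_add_le ((t : ℂ) - w) (w - z)
      simpa using this
    have hhalf : ‖(t : ℂ) - z‖ / 2 ≤ ‖(t : ℂ) - w‖ := by linarith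
    have hposz : 0 < ‖(t : ℂ) - z‖ := lt_of_lt_of_le hz hz_le
    have hmono : ‖(t : ℂ) - w‖ ^ (-(c + 1))
        ≤ (‖(t : ℂ) - z‖ / 2) ^ (-(c + 1)) :=
      Real.rpow_le_rpow_of_nonpos (by positivity) hhalf (by linarith)
    have hsplit : (‖(t : ℂ) - z‖ / 2) ^ (-(c + 1))
        = 2 ^ (c + 1) * ‖(t : ℂ) - z‖ ^ (-(c + 1)) := by
      rw [Real.div_rpow hposz.le (by norm_num), Real.rpow_neg (by norm_num : (0:ℝ) ≤ 2),
        div_eq_mul_inv, inv_inv, mul_comm]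
    have hfinal : ‖(t : ℂ) - w‖ ^ (-(c + 1))
        ≤ 2 ^ (c + 1) * ‖(t : ℂ) - z‖ ^ (-(c + 1)) := hsplit ▸ hmono
    calc ‖s t‖ * (c * ‖(t : ℂ) - w‖ ^ (-(c + 1)))
        ≤ ‖s t‖ * (c * (2 ^ (c + 1) * ‖(t : ℂ) - z‖ ^ (-(c + 1)))) := by
          gcongr
      _ = (c * 2 ^ (c + 1)) * (‖s t‖ * ‖(t : ℂ) - z‖ ^ (-(c + 1))) := by ring
  · exact (integrable_mul_kernel hs hz (by linarith : 1 < c + 1)).const_mul _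
  · refine Filter.Eventually.of_forall (fun t => fun w hw => ?_)
    have hw' : 0 < w.im := lt_trans hε (hball w hw)
    have h1 : HasDerivAt (fun w : ℂ => (t : ℂ) - w) (-1) w :=
      (hasDerivAt_id w).const_sub (t : ℂ)
    have h2 : HasDerivAt (fun w : ℂ => Complex.I * ((t : ℂ) - w)) (-Complex.I) w := by
      simpa using h1.const_mul Complex.I
    have h3 := h2.cpow_const (c := (((-c : ℝ)) : ℂ)) (base_mem_slitPlane hw' t)
    exact h3.const_mul (s t)
end

section
/- Let α > 1 and y, v > 0. Then ∫_0^∞ ξ^{α−1}·( y^{(α+1)/2}·e^{−yξ} − v^{(α+1)/2}·e^{−vξ} )² dξ ≤ Γ(α)·( y^{(α+1)/2} − v^{(α+1)/2} )² / (y+v)^α. -/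
open Real MeasureTheory

lemma jensen_two_aux {p y v : ℝ} (hp : 1 ≤ p) (hy : 0 ≤ y) (hv : 0 ≤ v) :
    (y + v) ^ p ≤ 2 ^ (p - 1) * (y ^ p + v ^ p) := by
  have h := NNReal.rpow_add_le_mul_rpow_add_rpow ⟨y, hy⟩ ⟨v, hv⟩ hp
  have h2 := NNReal.coe_le_coe.mpr h
  push_cast at h2
  exact h2

lemma exp_integral_aux {α s : ℝ} (hα : 0 < α) (hs : 0 < s) :
    ∫ ξ in Set.Ioi (0 : ℝ), ξ ^ (α - 1) * Real.exp (-s * ξ) = (1 / s) ^ α * Real.Gamma α := by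
  rw [← integral_rpow_mul_exp_neg_mul_Ioi hα hs]
  refine setIntegral_congr_fun measurableSet_Ioi (fun ξ hξ => ?_)
  rw [neg_mul]

lemma exp_integrable_aux {α s : ℝ} (hα : 0 < α) (hs : 0 < s) :
    IntegrableOn (fun ξ : ℝ => ξ ^ (α - 1) * Real.exp (-s * ξ)) (Set.Ioi 0) := by
  have := integrableOn_rpow_mul_exp_neg_mul_rpow (p := 1) (s := α - 1) (b := s)
    (by linarith) one_pos hs
  simpa using this

/-- Bound on the `real part' term via Jensen's inequality:
`∫_0^∞ ξ^(α-1)·(y^((α+1)/2)e^(-yξ) - v^((α+1)/2)e^(-vξ))² dξ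
  ≤ Γ(α)·(y^((α+1)/2) - v^((α+1)/2))²/(y+v)^α`. -/
theorem real_part_bound (α y v : ℝ) (hα : 1 < α) (hy : 0 < y) (hv : 0 < v) :
    (∫ ξ in Set.Ioi (0 : ℝ),
        ξ ^ (α - 1) *
          (y ^ ((α + 1) / 2) * Real.exp (-y * ξ) - v ^ ((α + 1) / 2) * Real.exp (-v * ξ)) ^ 2)
      ≤ Real.Gamma α * (y ^ ((α + 1) / 2) - v ^ ((α + 1) / 2)) ^ 2 / (y + v) ^ α := by
  have hα0 : 0 < α := by linarith
  set A := y ^ ((α + 1) / 2) with hA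
  set B := v ^ ((α + 1) / 2) with hB
  have hyv : 0 < y + v := by linarith
  have h2y : (0:ℝ) < 2 * y := by linarith
  have h2v : (0:ℝ) < 2 * v := by linarith
  -- rewrite the integrand
  have key : (∫ ξ in Set.Ioi (0 : ℝ),
        ξ ^ (α - 1) * (A * Real.exp (-y * ξ) - B * Real.exp (-v * ξ)) ^ 2)
      = A ^ 2 * ((1 / (2*y)) ^ α * Real.Gamma α)
        - 2 * A * B * ((1 / (y+v)) ^ α * Real.Gamma α)
        + B ^ 2 * ((1 / (2*v)) ^ α * Real.Gamma α) := by
    have hcongr : (∫ ξ in Set.Ioi (0 : ℝ),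
          ξ ^ (α - 1) * (A * Real.exp (-y * ξ) - B * Real.exp (-v * ξ)) ^ 2)
        = ∫ ξ in Set.Ioi (0 : ℝ),
            (A ^ 2 * (ξ ^ (α - 1) * Real.exp (-(2*y) * ξ))
              - 2 * A * B * (ξ ^ (α - 1) * Real.exp (-(y+v) * ξ)))
            + B ^ 2 * (ξ ^ (α - 1) * Real.exp (-(2*v) * ξ)) := by
      refine setIntegral_congr_fun measurableSet_Ioi (fun ξ _ => ?_)
      have e1 : Real.exp (-y * ξ) * Real.exp (-y * ξ) = Real.exp (-(2*y) * ξ) := by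
        rw [← Real.exp_add]; ring_nf
      have e2 : Real.exp (-v * ξ) * Real.exp (-v * ξ) = Real.exp (-(2*v) * ξ) := by
        rw [← Real.exp_add]; ring_nf
      have e3 : Real.exp (-y * ξ) * Real.exp (-v * ξ) = Real.exp (-(y+v) * ξ) := by
        rw [← Real.exp_add]; ring_nf
      rw [← e1, ← e2, ← e3]
      ring
    have hf1 := (exp_integrable_aux hα0 h2y).const_mul (A ^ 2)
    have hf2 := (exp_integrable_aux hα0 hyv).const_mul (2 * A * B)
    have hf3 := (exp_integrable_aux hα0 h2v).const_mul (B ^ 2)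
    rw [hcongr]
    have hadd := integral_add (hf1.sub hf2) hf3
    simp only [Pi.sub_apply] at hadd
    rw [hadd, integral_sub hf1 hf2,
      integral_const_mul, integral_const_mul, integral_const_mul,
      exp_integral_aux hα0 h2y, exp_integral_aux hα0 hyv, exp_integral_aux hα0 h2v]
  rw [key]
  -- now the algebraic inequality
  have hA2 : A ^ 2 = y ^ (α + 1) := by
    rw [hA, ← Real.rpow_natCast (y ^ ((α+1)/2)) 2, ← Real.rpow_mul hy.le]
    norm_num
  have hB2 : B ^ 2 = v ^ (α + 1) := by
    rw [hB, ← Real.rpow_natCast (v ^ ((α+1)/2)) 2, ← Real.rpow_mul hv.le]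
    norm_num
  have hΓ : 0 < Real.Gamma α := Real.Gamma_pos_of_pos hα0
  have hpow : ∀ s : ℝ, 0 < s → (1 / s) ^ α = 1 / s ^ α := fun s hs => by
    rw [one_div, Real.inv_rpow hs.le, one_div]
  -- main inequality: A²/(2y)^α + B²/(2v)^α ≤ (A²+B²)/(y+v)^α
  have hy2a : y ^ (α + 1) * (1 / (2*y)) ^ α = y / 2 ^ α := by
    rw [hpow _ h2y, Real.mul_rpow (by norm_num : (0:ℝ) ≤ 2) hy.le,
      Real.rpow_add hy, Real.rpow_one]
    field_simp
  have hv2a : v ^ (α + 1) * (1 / (2*v)) ^ α = v / 2 ^ α := by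
    rw [hpow _ h2v, Real.mul_rpow (by norm_num : (0:ℝ) ≤ 2) hv.le,
      Real.rpow_add hv, Real.rpow_one]
    field_simp
  have jensen : (y + v) ^ (α + 1) ≤ 2 ^ α * (y ^ (α+1) + v ^ (α+1)) := by
    have := jensen_two_aux (p := α + 1) (by linarith) hy.le hv.le
    simpa using this
  have hsum : y ^ (α+1) * (1 / (2*y)) ^ α + v ^ (α+1) * (1 / (2*v)) ^ α
      ≤ (y ^ (α+1) + v ^ (α+1)) / (y + v) ^ α := by
    rw [hy2a, hv2a, ← add_div, div_le_div_iff₀ (by positivity) (by positivity)]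
    calc (y + v) * (y + v) ^ α = (y + v) ^ (α + 1) := by
          rw [Real.rpow_add hyv, Real.rpow_one]; ring
      _ ≤ 2 ^ α * (y ^ (α+1) + v ^ (α+1)) := jensen
      _ = (y ^ (α+1) + v ^ (α+1)) * 2 ^ α := by ring
  -- combine
  have hAB : 0 ≤ A * B := by positivity
  have hmid : (1 / (y+v)) ^ α = 1 / (y+v) ^ α := hpow _ hyv
  rw [sub_sq]
  rw [hmid] at *
  have expand : A ^ 2 * ((1 / (2*y)) ^ α * Real.Gamma α)
        - 2 * A * B * (1 / (y+v) ^ α * Real.Gamma α)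
        + B ^ 2 * ((1 / (2*v)) ^ α * Real.Gamma α)
      = Real.Gamma α * (y ^ (α+1) * (1/(2*y))^α + v ^ (α+1) * (1/(2*v))^α)
        - Real.Gamma α * (2 * A * B) / (y+v) ^ α := by
    rw [hA2, hB2]; field_simp; ring
  rw [expand]
  have target : Real.Gamma α * (A ^ 2 - 2 * A * B + B ^ 2) / (y + v) ^ α
      = Real.Gamma α * ((y ^ (α+1) + v ^ (α+1)) / (y+v)^α)
        - Real.Gamma α * (2 * A * B) / (y+v) ^ α := by
    rw [← hA2, ← hB2]; field_simp; ring
  rw [target]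
  have := mul_le_mul_of_nonneg_left hsum hΓ.le
  linarith
end

section
/- Let α > 1. For s ∈ (0,1) define g̃(s) = ( s^α·(α(1−s) − s(1−s^α))² + (α·s^α·(1−s) − (1−s^α))² ) / (1−s^α)³ and G(s) = ( (α+1)·s^α·(1−s)² − (1−s^{α+1})² ) / ( s·(1−s^α)² ), where all powers of s are real powers. Then for all 0 < a ≤ b < 1, ∫_a^b r·g̃(1−r²)/(1−r²)² dr = (1/2)·( G(1−a²) − G(1−b²) ). -/
open Real intervalIntegral

/-- The numerically stable form of the pair correlation function of the zero set of the
hyperbolic GAF with parameter `α`, as a function of `s = 1 - r²`. -/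
noncomputable def gafPairCorr (α s : ℝ) : ℝ :=
  (s ^ α * (α * (1 - s) - s * (1 - s ^ α)) ^ 2
      + (α * s ^ α * (1 - s) - (1 - s ^ α)) ^ 2) / (1 - s ^ α) ^ 3

/-- The closed-form antiderivative arising in the exact computation of expected pair counts. -/
noncomputable def gafPairCorrAntideriv (α s : ℝ) : ℝ :=
  ((α + 1) * s ^ α * (1 - s) ^ 2 - (1 - s ^ (α + 1)) ^ 2) / (s * (1 - s ^ α) ^ 2)

lemma hasDerivAt_gafAntideriv (α : ℝ) (hα : 1 < α) {s : ℝ} (hs : 0 < s) (hs1 : s < 1) :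
    HasDerivAt (gafPairCorrAntideriv α) (gafPairCorr α s / s ^ 2) s := by
  have hs0 : s ≠ 0 := hs.ne'
  have htpos : 0 < s ^ α := Real.rpow_pos_of_pos hs α
  have ht1 : s ^ α < 1 := Real.rpow_lt_one hs.le hs1 (by linarith)
  have htne : (1 : ℝ) - s ^ α ≠ 0 := by nlinarith
  have h1 : HasDerivAt (fun x : ℝ => x ^ α) (α * s ^ (α - 1)) s := by
    simpa using Real.hasDerivAt_rpow_const (p := α) (Or.inl hs0)
  have h2 : HasDerivAt (fun x : ℝ => x ^ (α + 1)) ((α + 1) * s ^ α) s := by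
    have := Real.hasDerivAt_rpow_const (x := s) (p := α + 1) (Or.inl hs0)
    simpa using this
  have hnum := ((h1.const_mul (α + 1)).mul
      (((hasDerivAt_id s).const_sub 1).pow 2)).sub ((h2.const_sub 1).pow 2)
  have hden := (hasDerivAt_id s).mul ((h1.const_sub 1).pow 2)
  have hdne : s * (1 - s ^ α) ^ 2 ≠ 0 := mul_ne_zero hs0 (pow_ne_zero 2 htne)
  have hdiv := hnum.div hden hdne
  simp only [id] at hdiv
  unfold gafPairCorrAntideriv
  refine hdiv.congr_deriv ?_
  have e1 : s ^ (α + 1) = s ^ α * s := by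
    rw [Real.rpow_add hs, Real.rpow_one]
  have e2 : s ^ (α - 1) = s ^ α / s := by
    rw [Real.rpow_sub hs, Real.rpow_one]
  unfold gafPairCorr
  simp only [Pi.mul_apply, Pi.pow_apply, Pi.sub_apply, id]
  rw [e1, e2]
  push_cast
  field_simp
  ring

/-- Closed-form evaluation of the pair-count integral:
`∫_a^b r·g̃(1-r²)/(1-r²)² dr = (1/2)(G(1-a²) - G(1-b²))`. -/
theorem pair_count_integral (α : ℝ) (hα : 1 < α) (a b : ℝ)
    (ha : 0 < a) (hab : a ≤ b) (hb : b < 1) :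
    (∫ r in a..b, r * gafPairCorr α (1 - r ^ 2) / (1 - r ^ 2) ^ 2)
      = (1 / 2) * (gafPairCorrAntideriv α (1 - a ^ 2) - gafPairCorrAntideriv α (1 - b ^ 2)) := by
  have hsub : ∀ r ∈ Set.uIcc a b, 0 < 1 - r ^ 2 ∧ 1 - r ^ 2 < 1 := by
    intro r hr
    rw [Set.uIcc_of_le hab] at hr
    constructor <;> nlinarith [hr.1, hr.2]
  have hderiv : ∀ r ∈ Set.uIcc a b,
      HasDerivAt (fun x => -(1 / 2) * gafPairCorrAntideriv α (1 - x ^ 2))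
        (r * gafPairCorr α (1 - r ^ 2) / (1 - r ^ 2) ^ 2) r := by
    intro r hr
    obtain ⟨h1, h2⟩ := hsub r hr
    have hinner : HasDerivAt (fun x : ℝ => 1 - x ^ 2) (-(2 * r)) r := by
      simpa using ((hasDerivAt_pow 2 r).const_sub 1)
    have hG := (hasDerivAt_gafAntideriv α hα h1 h2).comp r hinner
    have := hG.const_mul (-(1 / 2))
    refine this.congr_deriv ?_
    field_simp
  have hc0 : ContinuousOn (fun r : ℝ => 1 - r ^ 2) (Set.uIcc a b) := by fun_prop
  have hc1 : ContinuousOn (fun r : ℝ => (1 - r ^ 2) ^ α) (Set.uIcc a b) :=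
    hc0.rpow_const (fun x hx => Or.inl (hsub x hx).1.ne')
  have hcorr : ContinuousOn (fun r : ℝ => gafPairCorr α (1 - r ^ 2)) (Set.uIcc a b) := by
    unfold gafPairCorr
    apply ContinuousOn.div
    · exact (hc1.mul
        (((continuousOn_const.mul (continuousOn_const.sub hc0)).sub
          (hc0.mul (continuousOn_const.sub hc1))).pow 2)).add
        ((((continuousOn_const.mul hc1).mul (continuousOn_const.sub hc0)).sub
          (continuousOn_const.sub hc1)).pow 2)
    · exact (continuousOn_const.sub hc1).pow 3
    · intro x hx
      have h := hsub x hx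
      have ht1 : (1 - x ^ 2) ^ α < 1 := Real.rpow_lt_one h.1.le h.2 (by linarith)
      exact pow_ne_zero 3 (by linarith)
  have hcont : ContinuousOn
      (fun r => r * gafPairCorr α (1 - r ^ 2) / (1 - r ^ 2) ^ 2) (Set.uIcc a b) := by
    apply ContinuousOn.div
    · exact continuousOn_id.mul hcorr
    · exact hc0.pow 2
    · intro x hx
      exact pow_ne_zero 2 (hsub x hx).1.ne'
  rw [intervalIntegral.integral_eq_sub_of_hasDerivAt hderiv hcont.intervalIntegrable]
  ring
end

section
/- Let α > 1 and define G(s) = ( (α+1)·s^α·(1−s)² − (1−s^{α+1})² ) / ( s·(1−s^α)² ) for s ∈ (0,1), where all powers of s are real powers. Then G(s) tends to −(α+1)/α as s tends to 1 from the left. -/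
open Real Filter Topology

lemma ratio_tendsto_aux (β : ℝ) :
    Tendsto (fun s : ℝ => (1 - s ^ β) / (1 - s)) (nhdsWithin 1 (Set.Iio 1)) (nhds β) := by
  have h : HasDerivAt (fun x : ℝ => x ^ β) (β * (1:ℝ) ^ (β - 1)) 1 :=
    Real.hasDerivAt_rpow_const (Or.inl one_ne_zero)
  rw [Real.one_rpow, mul_one] at h
  have h2 := hasDerivAt_iff_tendsto_slope.mp h
  have h3 : Tendsto (slope (fun x : ℝ => x ^ β) 1) (nhdsWithin 1 (Set.Iio 1)) (nhds β) :=
    h2.mono_left (nhdsWithin_mono _ (fun x hx => ne_of_lt hx))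
  refine h3.congr' ?_
  filter_upwards [self_mem_nhdsWithin] with s hs
  simp only [slope_def_field, Real.one_rpow]
  rw [← neg_div_neg_eq]
  ring_nf

/-- `G(s) → -(α+1)/α` as `s → 1⁻`. -/
theorem gafPairCorrAntideriv_tendsto (α : ℝ) (hα : 1 < α) :
    Filter.Tendsto (gafPairCorrAntideriv α) (nhdsWithin 1 (Set.Iio 1))
      (nhds (-(α + 1) / α)) := by
  have hα0 : α ≠ 0 := by positivity
  have hr : Tendsto (fun s : ℝ => (1 - s) / (1 - s ^ α)) (nhdsWithin 1 (Set.Iio 1))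
      (nhds α⁻¹) := by
    have := (ratio_tendsto_aux α).inv₀ hα0
    refine this.congr (fun s => ?_)
    rw [inv_div]
  have hq := ratio_tendsto_aux (α + 1)
  have hs1 : Tendsto (fun s : ℝ => s) (nhdsWithin 1 (Set.Iio 1)) (nhds 1) :=
    tendsto_id.mono_left nhdsWithin_le_nhds
  have hsa : Tendsto (fun s : ℝ => s ^ α) (nhdsWithin 1 (Set.Iio 1)) (nhds 1) := by
    have : ContinuousAt (fun s : ℝ => s ^ α) 1 :=
      Real.continuousAt_rpow_const 1 α (Or.inl one_ne_zero)
    simpa [Real.one_rpow] using this.tendsto.mono_left nhdsWithin_le_nhds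
  have hF : Tendsto (fun s : ℝ =>
      ((α + 1) * s ^ α * ((1 - s) / (1 - s ^ α)) ^ 2
        - ((1 - s ^ (α + 1)) / (1 - s) * ((1 - s) / (1 - s ^ α))) ^ 2) / s)
      (nhdsWithin 1 (Set.Iio 1))
      (nhds (((α + 1) * 1 * (α⁻¹) ^ 2 - ((α + 1) * α⁻¹) ^ 2) / 1)) := by
    exact (((tendsto_const_nhds.mul hsa).mul (hr.pow 2)).sub
      ((hq.mul hr).pow 2)).div hs1 one_ne_zero
  have hval : ((α + 1) * 1 * (α⁻¹) ^ 2 - ((α + 1) * α⁻¹) ^ 2) / 1 = -(α + 1) / α := by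
    field_simp
    ring
  rw [hval] at hF
  refine hF.congr' ?_
  have hmem : Set.Ioo (0:ℝ) 1 ∈ nhdsWithin (1:ℝ) (Set.Iio 1) :=
    Ioo_mem_nhdsLT_of_mem (by constructor <;> norm_num)
  filter_upwards [hmem] with s hs
  obtain ⟨h0, h1⟩ := hs
  have hsα : s ^ α < 1 := Real.rpow_lt_one h0.le h1 (by positivity)
  have hne1 : (1 : ℝ) - s ^ α ≠ 0 := by linarith
  have hne2 : (1 : ℝ) - s ≠ 0 := by linarith
  unfold gafPairCorrAntideriv
  rw [Real.rpow_add h0, Real.rpow_one]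
  field_simp
end
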